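/- arXiv:1612.01052 — 4 statements merged into one kernel-verified Lean document; each statement's English description precedes it below -/
import Mathlib

section
/- Let A be an operator algebra on a Hilbert space H, let J ⊆ A be a closed two-sided ideal admitting a bounded approximate identity (e_λ) with sup_λ ‖e_λ‖ = M, and let θ : J → B(K) be a non-degenerate bounded representation (i.e., the closed linear span of θ(J)K equals K). Then there exists a unique bounded representation θ̂ : A → B(K) extending θ, and it satisfies ‖θ̂‖ ≤ M‖θ‖. -/
noncomputable section

/-- The `n`-th amplification of a matrix of operators, acting on the Hilbert space
`ℓ²`-direct sum of `n` copies of `H`.  Its operator norm is the norm of the matrix in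
`M_n(B(H))`. -/
def amp {H : Type} [NormedAddCommGroup H] [InnerProductSpace ℂ H]
    (n : ℕ) (a : Matrix (Fin n) (Fin n) (H →L[ℂ] H)) :
    (PiLp 2 fun _ : Fin n => H) →L[ℂ] (PiLp 2 fun _ : Fin n => H) :=
  ((PiLp.continuousLinearEquiv 2 ℂ (fun _ : Fin n => H)).symm.toContinuousLinearMap) ∘L
    (ContinuousLinearMap.pi (fun i => ∑ j, (a i j) ∘L ContinuousLinearMap.proj j)) ∘L
    ((PiLp.continuousLinearEquiv 2 ℂ (fun _ : Fin n => H)).toContinuousLinearMap)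

variable {H K : Type} [NormedAddCommGroup H] [InnerProductSpace ℂ H]
  [NormedAddCommGroup K] [InnerProductSpace ℂ K]

/-- `A ⊆ B(H)` is an operator algebra: a norm-closed subalgebra. -/
def IsOpAlg (A : Set (H →L[ℂ] H)) : Prop :=
  IsClosed A ∧ (0 : H →L[ℂ] H) ∈ A ∧
  (∀ a ∈ A, ∀ b ∈ A, a + b ∈ A) ∧
  (∀ (c : ℂ), ∀ a ∈ A, c • a ∈ A) ∧
  (∀ a ∈ A, ∀ b ∈ A, a * b ∈ A)

/-- `J` is a closed two-sided ideal of `A`. -/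
def IsClosedIdealIn (J A : Set (H →L[ℂ] H)) : Prop :=
  J ⊆ A ∧ IsClosed J ∧ (0 : H →L[ℂ] H) ∈ J ∧
  (∀ a ∈ J, ∀ b ∈ J, a + b ∈ J) ∧
  (∀ (c : ℂ), ∀ a ∈ J, c • a ∈ J) ∧
  (∀ a ∈ A, ∀ j ∈ J, a * j ∈ J ∧ j * a ∈ J)

/-- `θ` is a (bounded) representation of `A` on the Hilbert space `K`:
linear, multiplicative and bounded on `A`. -/
def IsRepOn (A : Set (H →L[ℂ] H)) (θ : (H →L[ℂ] H) → (K →L[ℂ] K)) : Prop :=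
  (∀ a ∈ A, ∀ b ∈ A, θ (a + b) = θ a + θ b) ∧
  (∀ (c : ℂ), ∀ a ∈ A, θ (c • a) = c • θ a) ∧
  (∀ a ∈ A, ∀ b ∈ A, θ (a * b) = θ a * θ b) ∧
  (∃ C : ℝ, ∀ a ∈ A, ‖θ a‖ ≤ C * ‖a‖)

/-- All entries of the matrix `a` belong to `A`. -/
def MatEntriesIn (A : Set (H →L[ℂ] H)) {n : ℕ}
    (a : Matrix (Fin n) (Fin n) (H →L[ℂ] H)) : Prop :=
  ∀ i j, a i j ∈ A

/-- `‖θ⁽ⁿ⁾‖ ≤ C` on matrices with entries in `A`. -/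
def AmpBound (A : Set (H →L[ℂ] H)) (θ : (H →L[ℂ] H) → (K →L[ℂ] K))
    (n : ℕ) (C : ℝ) : Prop :=
  ∀ a : Matrix (Fin n) (Fin n) (H →L[ℂ] H), MatEntriesIn A a →
    ‖amp n (a.map θ)‖ ≤ C * ‖amp n a‖

/-- `θ` is completely bounded on `A`. -/
def CompletelyBoundedOn (A : Set (H →L[ℂ] H))
    (θ : (H →L[ℂ] H) → (K →L[ℂ] K)) : Prop :=
  ∃ C : ℝ, ∀ n : ℕ, AmpBound A θ n C

/-- `θ` is completely contractive on `A`. -/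
def CompletelyContractiveOn (A : Set (H →L[ℂ] H))
    (θ : (H →L[ℂ] H) → (K →L[ℂ] K)) : Prop :=
  ∀ n : ℕ, AmpBound A θ n 1

/-- `θ` is completely isometric on `A`. -/
def CompletelyIsometricOn (A : Set (H →L[ℂ] H))
    (θ : (H →L[ℂ] H) → (K →L[ℂ] K)) : Prop :=
  ∀ (n : ℕ) (a : Matrix (Fin n) (Fin n) (H →L[ℂ] H)), MatEntriesIn A a →
    ‖amp n (a.map θ)‖ = ‖amp n a‖

/-- The closure of the linear span of `{t ξ : t ∈ T, ξ ∈ V}`. -/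
def closSpanOrbit (T : Set (K →L[ℂ] K)) (V : Submodule ℂ K) : Submodule ℂ K :=
  (Submodule.span ℂ {x : K | ∃ t ∈ T, ∃ ξ ∈ V, x = t ξ}).topologicalClosure

/-- A set of operators acts non-degenerately. -/
def ActsNonDeg (T : Set (K →L[ℂ] K)) : Prop :=
  closSpanOrbit T ⊤ = ⊤

/-- `J` admits a bounded approximate identity with bound `M`. -/
def IsBAIFor (J : Set (H →L[ℂ] H)) (M : ℝ) : Prop :=
  ∃ (ι : Type) (inst : SemilatticeSup ι), Nonempty ι ∧
    ∃ e : ι → H →L[ℂ] H, (∀ i, e i ∈ J) ∧ (∀ i, ‖e i‖ ≤ M) ∧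
      ∀ a ∈ J,
        Filter.Tendsto (fun i => ‖a * e i - a‖)
          (@Filter.atTop ι inst.toPartialOrder.toPreorder) (nhds 0) ∧
        Filter.Tendsto (fun i => ‖e i * a - a‖)
          (@Filter.atTop ι inst.toPartialOrder.toPreorder) (nhds 0)

/-- The total reduction property: every closed invariant subspace of every representation
is the range of a bounded idempotent commuting with the image. -/
def HasTRP (A : Set (H →L[ℂ] H)) : Prop :=
  ∀ (K' : Type) [NormedAddCommGroup K'] [InnerProductSpace ℂ K'] [CompleteSpace K']
    (θ : (H →L[ℂ] H) → (K' →L[ℂ] K')), IsRepOn A θ →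
    ∀ M : Submodule ℂ K', IsClosed (M : Set K') →
      (∀ a ∈ A, ∀ ξ ∈ M, θ a ξ ∈ M) →
      ∃ E : K' →L[ℂ] K', E * E = E ∧ LinearMap.range (E : K' →ₗ[ℂ] K') = M ∧ ∀ a ∈ A, E * θ a = θ a * E

/-- The SP property: every bounded representation is completely bounded. -/
def HasSP (A : Set (H →L[ℂ] H)) : Prop :=
  ∀ (K' : Type) [NormedAddCommGroup K'] [InnerProductSpace ℂ K'] [CompleteSpace K']
    (θ : (H →L[ℂ] H) → (K' →L[ℂ] K')), IsRepOn A θ → CompletelyBoundedOn A θ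

/-- The quotient norm of `a` in `A/J`. -/
def qNorm (J : Set (H →L[ℂ] H)) (a : H →L[ℂ] H) : ℝ :=
  sInf {r : ℝ | ∃ j ∈ J, r = ‖a + j‖}

/-- The quotient norm of a matrix in `M_n(A/J)`. -/
def qAmpNorm (J : Set (H →L[ℂ] H)) (n : ℕ)
    (a : Matrix (Fin n) (Fin n) (H →L[ℂ] H)) : ℝ :=
  sInf {r : ℝ | ∃ b : Matrix (Fin n) (Fin n) (H →L[ℂ] H), MatEntriesIn J b ∧ r = ‖amp n (a + b)‖}

/-- The SP property for the quotient algebra `A/J`: every representation of `A` which kills `J`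
and is bounded for the quotient norm is completely bounded for the quotient operator space
structure. -/
def HasSPQuot (A J : Set (H →L[ℂ] H)) : Prop :=
  ∀ (K' : Type) [NormedAddCommGroup K'] [InnerProductSpace ℂ K'] [CompleteSpace K']
    (θ : (H →L[ℂ] H) → (K' →L[ℂ] K')), IsRepOn A θ → (∀ j ∈ J, θ j = 0) →
    (∃ C : ℝ, ∀ a ∈ A, ‖θ a‖ ≤ C * qNorm J a) →
    ∃ C : ℝ, ∀ (n : ℕ) (a : Matrix (Fin n) (Fin n) (H →L[ℂ] H)), MatEntriesIn A a →
      ‖amp n (a.map θ)‖ ≤ C * qAmpNorm J n a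

/-- The C*-algebra generated by `A` inside `B(H)`: the smallest closed star-subalgebra
containing `A`. -/
def CstarSet [CompleteSpace H] (A : Set (H →L[ℂ] H)) : Set (H →L[ℂ] H) :=
  ⋂₀ {S : Set (H →L[ℂ] H) | A ⊆ S ∧ IsClosed S ∧ (0 : H →L[ℂ] H) ∈ S ∧
    (∀ a ∈ S, ∀ b ∈ S, a + b ∈ S) ∧ (∀ (c : ℂ), ∀ a ∈ S, c • a ∈ S) ∧
    (∀ a ∈ S, ∀ b ∈ S, a * b ∈ S) ∧ (∀ a ∈ S, star a ∈ S)}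


theorem extension_of_nondegenerate_rep
    {H K : Type} [NormedAddCommGroup H] [InnerProductSpace ℂ H] [CompleteSpace H]
    [NormedAddCommGroup K] [InnerProductSpace ℂ K] [CompleteSpace K]
    (A J : Set (H →L[ℂ] H)) (hA : IsOpAlg A) (hJ : IsClosedIdealIn J A)
    (M C : ℝ) (hC : 0 ≤ C) (hbai : IsBAIFor J M)
    (θ : (H →L[ℂ] H) → (K →L[ℂ] K)) (hrep : IsRepOn J θ)
    (hbd : ∀ j ∈ J, ‖θ j‖ ≤ C * ‖j‖)
    (hnd : ActsNonDeg (θ '' J)) :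
    ∃ θh : (H →L[ℂ] H) → (K →L[ℂ] K),
      IsRepOn A θh ∧ (∀ j ∈ J, θh j = θ j) ∧
      (∀ a ∈ A, ‖θh a‖ ≤ M * C * ‖a‖) ∧
      (∀ θ' : (H →L[ℂ] H) → (K →L[ℂ] K), IsRepOn A θ' → (∀ j ∈ J, θ' j = θ j) →
        ∀ a ∈ A, θ' a = θh a) := by
  classical
  obtain ⟨hAcl, hA0, hAadd, hAsmul, hAmul⟩ := hA
  obtain ⟨hJA, hJcl, hJ0, hJadd, hJsmul, hJideal⟩ := hJ
  obtain ⟨hθadd, hθsmul, hθmul, -⟩ := hrep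
  obtain ⟨ι, instι, hne, e, heJ, heM, hlim⟩ := hbai
  letI := instι
  haveI : Nonempty ι := hne
  obtain ⟨i0⟩ := hne
  have hM0 : 0 ≤ M := le_trans (norm_nonneg _) (heM i0)
  have haeJ : ∀ a ∈ A, ∀ j ∈ J, a * j ∈ J := fun a ha j hj => (hJideal a ha j hj).1
  -- θ is Lipschitz on J
  have hθlip : ∀ x ∈ J, ∀ y ∈ J, ‖θ x - θ y‖ ≤ C * ‖x - y‖ := by
    intro x hx y hy
    have hy' : (-1 : ℂ) • y ∈ J := hJsmul (-1) y hy
    have hmem : x - y ∈ J := by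
      have := hJadd x hx _ hy'
      simpa [neg_one_smul, sub_eq_add_neg] using this
    have heq : θ (x - y) = θ x - θ y := by
      calc θ (x - y) = θ (x + (-1 : ℂ) • y) := by rw [neg_one_smul, ← sub_eq_add_neg]
        _ = θ x + θ ((-1 : ℂ) • y) := hθadd x hx _ hy'
        _ = θ x + (-1 : ℂ) • θ y := by rw [hθsmul (-1) y hy]
        _ = θ x - θ y := by rw [neg_one_smul, ← sub_eq_add_neg]
    rw [← heq]; exact hbd _ hmem
  -- norm-continuity of θ along nets in J, applied pointwise
  have hθtend : ∀ (g : ι → (H →L[ℂ] H)) (x : H →L[ℂ] H), (∀ i, g i ∈ J) → x ∈ J →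
      Filter.Tendsto (fun i => ‖g i - x‖) Filter.atTop (nhds 0) → ∀ ξ : K,
      Filter.Tendsto (fun i => θ (g i) ξ) Filter.atTop (nhds (θ x ξ)) := by
    intro g x hg hx hgx ξ
    rw [tendsto_iff_norm_sub_tendsto_zero]
    refine squeeze_zero (fun i => norm_nonneg _) (g := fun i => C * ‖g i - x‖ * ‖ξ‖) ?_ ?_
    · intro i
      calc ‖θ (g i) ξ - θ x ξ‖ = ‖(θ (g i) - θ x) ξ‖ := by
            rw [ContinuousLinearMap.sub_apply]
        _ ≤ ‖θ (g i) - θ x‖ * ‖ξ‖ := (θ (g i) - θ x).le_opNorm ξ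
        _ ≤ C * ‖g i - x‖ * ‖ξ‖ := by
            gcongr
            exact hθlip _ (hg i) _ hx
    · have := (hgx.const_mul C).mul_const ‖ξ‖
      simpa using this
  have heiJ : ∀ (i : ι), ∀ j ∈ J, e i * j ∈ J := fun i j hj =>
    (hJideal (e i) (hJA (heJ i)) j hj).1
  have hmulJ : ∀ a ∈ A, ∀ j ∈ J,
      Filter.Tendsto (fun i => ‖a * (e i * j) - a * j‖) Filter.atTop (nhds 0) := by
    intro a ha j hj
    refine squeeze_zero (fun i => norm_nonneg _) (g := fun i => ‖a‖ * ‖e i * j - j‖) ?_ ?_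
    · intro i
      calc ‖a * (e i * j) - a * j‖ = ‖a * (e i * j - j)‖ := by rw [mul_sub]
        _ ≤ ‖a‖ * ‖e i * j - j‖ := norm_mul_le _ _
    · simpa using ((hlim j hj).2).const_mul ‖a‖
  -- convergence on generators
  have hgen : ∀ a ∈ A, ∀ j ∈ J, ∀ ξ : K,
      Filter.Tendsto (fun i => θ (a * e i) (θ j ξ)) Filter.atTop (nhds (θ (a * j) ξ)) := by
    intro a ha j hj ξ
    have hfun : ∀ i, θ (a * e i) (θ j ξ) = θ (a * (e i * j)) ξ := by
      intro i
      calc θ (a * e i) (θ j ξ) = (θ (a * e i) * θ j) ξ := rfl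
        _ = θ (a * e i * j) ξ := by rw [hθmul _ (haeJ a ha _ (heJ i)) j hj]
        _ = θ (a * (e i * j)) ξ := by rw [mul_assoc]
    simp only [hfun]
    exact hθtend _ _ (fun i => haeJ a ha _ (heiJ i j hj)) (haeJ a ha j hj)
      (hmulJ a ha j hj) ξ
  -- uniform bound
  have hopb : ∀ a ∈ A, ∀ (i : ι), ∀ η : K, ‖θ (a * e i) η‖ ≤ M * C * ‖a‖ * ‖η‖ := by
    intro a ha i η
    calc ‖θ (a * e i) η‖ ≤ ‖θ (a * e i)‖ * ‖η‖ := (θ (a * e i)).le_opNorm η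
      _ ≤ (C * ‖a * e i‖) * ‖η‖ := by
          gcongr
          exact hbd _ (haeJ a ha _ (heJ i))
      _ ≤ (C * (‖a‖ * M)) * ‖η‖ := by
          gcongr
          calc ‖a * e i‖ ≤ ‖a‖ * ‖e i‖ := norm_mul_le _ _
            _ ≤ ‖a‖ * M := by gcongr; exact heM i
      _ = M * C * ‖a‖ * ‖η‖ := by ring
  -- density
  set S0 : Set K := {x : K | ∃ t ∈ θ '' J, ∃ ξ ∈ (⊤ : Submodule ℂ K), x = t ξ} with hS0def
  have hdense : Dense (↑(Submodule.span ℂ S0) : Set K) := by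
    rw [Submodule.dense_iff_topologicalClosure_eq_top]
    exact hnd
  have hS0 : ∀ x ∈ S0, ∃ j ∈ J, ∃ ξ : K, x = θ j ξ := by
    rintro x ⟨t, ⟨j, hj, rfl⟩, ξ, -, rfl⟩
    exact ⟨j, hj, ξ, rfl⟩
  -- main existence of the limit operator
  have hmain : ∀ a ∈ A, ∃ T : K →L[ℂ] K,
      (∀ η : K, Filter.Tendsto (fun i => θ (a * e i) η) Filter.atTop (nhds (T η))) ∧
      ‖T‖ ≤ M * C * ‖a‖ := by
    intro a ha
    have hB0 : 0 ≤ M * C * ‖a‖ := mul_nonneg (mul_nonneg hM0 hC) (norm_nonneg a)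
    have hbd2 := hopb a ha
    have hspan : ∀ η ∈ Submodule.span ℂ S0,
        ∃ L, Filter.Tendsto (fun i => θ (a * e i) η) Filter.atTop (nhds L) := by
      intro η hη
      induction hη using Submodule.span_induction with
      | mem x hx =>
          obtain ⟨j, hj, ξ, rfl⟩ := hS0 x hx
          exact ⟨θ (a * j) ξ, hgen a ha j hj ξ⟩
      | zero => exact ⟨0, by simp⟩
      | add x y _ _ hx hy =>
          obtain ⟨Lx, hLx⟩ := hx
          obtain ⟨Ly, hLy⟩ := hy
          exact ⟨Lx + Ly, by simpa only [map_add] using hLx.add hLy⟩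
      | smul c x _ hx =>
          obtain ⟨L, hL⟩ := hx
          exact ⟨c • L, by simpa only [map_smul] using hL.const_smul c⟩
    have hall : ∀ η : K, ∃ L, Filter.Tendsto (fun i => θ (a * e i) η) Filter.atTop (nhds L) := by
      intro η
      apply cauchySeq_tendsto_of_complete
      rw [Metric.cauchySeq_iff]
      intro ε hε
      have hδ : 0 < ε / (4 * (M * C * ‖a‖ + 1)) := by positivity
      obtain ⟨η', hball, hmemspan⟩ := (Metric.dense_iff.mp hdense η _ hδ)
      obtain ⟨L', hL'⟩ := hspan η' hmemspan
      obtain ⟨N, hN⟩ := Metric.cauchySeq_iff.mp hL'.cauchySeq (ε / 2) (by positivity)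
      refine ⟨N, fun m hm n hn => ?_⟩
      have hdist : ‖η - η'‖ < ε / (4 * (M * C * ‖a‖ + 1)) := by
        rw [← dist_eq_norm, dist_comm]
        exact Metric.mem_ball.mp hball
      have e1 : ∀ k : ι, ‖θ (a * e k) η - θ (a * e k) η'‖ ≤ M * C * ‖a‖ * ‖η - η'‖ := by
        intro k
        rw [← map_sub]
        exact hbd2 k _
      have key : M * C * ‖a‖ * ‖η - η'‖ < ε / 4 := by
        have h1 : M * C * ‖a‖ * ‖η - η'‖ ≤ (M * C * ‖a‖ + 1) * ‖η - η'‖ := by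
          have := norm_nonneg (η - η')
          nlinarith
        have h2 : (M * C * ‖a‖ + 1) * ‖η - η'‖ < (M * C * ‖a‖ + 1) * (ε / (4 * (M * C * ‖a‖ + 1))) := by
          have hpos : (0:ℝ) < M * C * ‖a‖ + 1 := by linarith
          exact (mul_lt_mul_iff_right₀ hpos).mpr hdist
        have h3 : (M * C * ‖a‖ + 1) * (ε / (4 * (M * C * ‖a‖ + 1))) = ε / 4 := by
          have hpos : (M * C * ‖a‖ + 1) ≠ 0 := by positivity
          field_simp
        linarith
      have tri : dist (θ (a * e m) η) (θ (a * e n) η) ≤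
          ‖θ (a * e m) η - θ (a * e m) η'‖ + dist (θ (a * e m) η') (θ (a * e n) η') +
          ‖θ (a * e n) η' - θ (a * e n) η‖ := by
        rw [dist_eq_norm, dist_eq_norm]
        have hdecomp : θ (a * e m) η - θ (a * e n) η =
            (θ (a * e m) η - θ (a * e m) η') + (θ (a * e m) η' - θ (a * e n) η') +
            (θ (a * e n) η' - θ (a * e n) η) := by abel
        rw [hdecomp]
        exact norm_add₃_le
      have e2 : ‖θ (a * e n) η' - θ (a * e n) η‖ ≤ M * C * ‖a‖ * ‖η - η'‖ := by
        rw [norm_sub_rev]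
        exact e1 n
      have e3 := hN m hm n hn
      have e4 := e1 m
      calc dist (θ (a * e m) η) (θ (a * e n) η) ≤ _ := tri
        _ < ε := by linarith
    choose g hg using hall
    have gadd : ∀ x y : K, g (x + y) = g x + g y := fun x y =>
      tendsto_nhds_unique (hg (x + y)) (by simpa only [map_add] using (hg x).add (hg y))
    have gsmul : ∀ (c : ℂ) (x : K), g (c • x) = c • g x := fun c x =>
      tendsto_nhds_unique (hg (c • x)) (by simpa only [map_smul] using (hg x).const_smul c)
    have gbound : ∀ x : K, ‖g x‖ ≤ M * C * ‖a‖ * ‖x‖ := fun x =>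
      le_of_tendsto' (hg x).norm (fun i => hbd2 i x)
    refine ⟨LinearMap.mkContinuous ⟨⟨g, gadd⟩, gsmul⟩ (M * C * ‖a‖) gbound,
      fun η => hg η, LinearMap.mkContinuous_norm_le _ hB0 _⟩
  -- define the extension
  set θh : (H →L[ℂ] H) → (K →L[ℂ] K) :=
    fun a => if ha : a ∈ A then (hmain a ha).choose else 0 with hθhdef
  have hP : ∀ a (ha : a ∈ A), ∀ η : K,
      Filter.Tendsto (fun i => θ (a * e i) η) Filter.atTop (nhds (θh a η)) := by
    intro a ha η
    simp only [hθhdef, dif_pos ha]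
    exact (hmain a ha).choose_spec.1 η
  have hNb : ∀ a (ha : a ∈ A), ‖θh a‖ ≤ M * C * ‖a‖ := by
    intro a ha
    simp only [hθhdef, dif_pos ha]
    exact (hmain a ha).choose_spec.2
  have huniqT : ∀ a (ha : a ∈ A) (T : K →L[ℂ] K),
      (∀ η : K, Filter.Tendsto (fun i => θ (a * e i) η) Filter.atTop (nhds (T η))) → T = θh a := by
    intro a ha T hT
    ext η
    exact tendsto_nhds_unique (hT η) (hP a ha η)
  -- θh extends θ
  have hext : ∀ j ∈ J, θh j = θ j := by
    intro j hj
    refine (huniqT j (hJA hj) (θ j) ?_).symm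
    intro η
    exact hθtend (fun i => j * e i) j (fun i => (hJideal (e i) (hJA (heJ i)) j hj).2)
      hj (hlim j hj).1 η
  -- key composition identity
  have hcomp : ∀ a ∈ A, ∀ x ∈ J, ∀ ξ : K, θh a (θ x ξ) = θ (a * x) ξ := fun a ha x hx ξ =>
    tendsto_nhds_unique (hP a ha (θ x ξ)) (hgen a ha x hx ξ)
  -- algebraic properties
  have hadd : ∀ a ∈ A, ∀ b ∈ A, θh (a + b) = θh a + θh b := by
    intro a ha b hb
    refine (huniqT (a + b) (hAadd a ha b hb) (θh a + θh b) ?_).symm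
    intro η
    have hfun : ∀ i, θ ((a + b) * e i) η = θ (a * e i) η + θ (b * e i) η := by
      intro i
      rw [add_mul, hθadd _ (haeJ a ha _ (heJ i)) _ (haeJ b hb _ (heJ i))]
      rfl
    simp only [hfun]
    exact (hP a ha η).add (hP b hb η)
  have hsmul : ∀ (c : ℂ), ∀ a ∈ A, θh (c • a) = c • θh a := by
    intro c a ha
    refine (huniqT (c • a) (hAsmul c a ha) (c • θh a) ?_).symm
    intro η
    have hfun : ∀ i, θ ((c • a) * e i) η = c • θ (a * e i) η := by
      intro i
      rw [smul_mul_assoc, hθsmul c _ (haeJ a ha _ (heJ i))]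
      rfl
    simp only [hfun]
    exact (hP a ha η).const_smul c
  have hmul : ∀ a ∈ A, ∀ b ∈ A, θh (a * b) = θh a * θh b := by
    intro a ha b hb
    refine (huniqT (a * b) (hAmul a ha b hb) (θh a * θh b) ?_).symm
    intro η
    have hfun : ∀ i, θ (a * b * e i) η = θh a (θ (b * e i) η) := by
      intro i
      rw [mul_assoc]
      exact (hcomp a ha _ (haeJ b hb _ (heJ i)) η).symm
    simp only [hfun]
    exact ((θh a).continuous.tendsto (θh b η)).comp (hP b hb η)
  refine ⟨θh, ⟨hadd, hsmul, hmul, ⟨M * C, fun a ha => ?_⟩⟩, hext, hNb, ?_⟩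
  · calc ‖θh a‖ ≤ M * C * ‖a‖ := hNb a ha
      _ = M * C * ‖a‖ := rfl
  · intro θ' hrep' hext' a ha
    obtain ⟨hadd', hsmul', hmul', -⟩ := hrep'
    have hEq : Set.EqOn (⇑(θ' a)) (⇑(θh a)) (↑(Submodule.span ℂ S0)) := by
      intro η hη
      induction hη using Submodule.span_induction with
      | mem x hx =>
          obtain ⟨j, hj, ξ, rfl⟩ := hS0 x hx
          calc θ' a (θ j ξ) = θ' a (θ' j ξ) := by rw [hext' j hj]
            _ = (θ' a * θ' j) ξ := rfl
            _ = θ' (a * j) ξ := by rw [hmul' a ha j (hJA hj)]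
            _ = θ (a * j) ξ := by rw [hext' _ (haeJ a ha j hj)]
            _ = θh a (θ j ξ) := (hcomp a ha j hj ξ).symm
      | zero => simp
      | add x y _ _ hx hy => simp only [map_add, hx, hy]
      | smul c x _ hx => simp only [map_smul, hx]
    have := Continuous.ext_on hdense (θ' a).continuous (θh a).continuous hEq
    exact ContinuousLinearMap.ext fun η => congrFun this η

end
end

section
/- Let A be an operator algebra on a Hilbert space H, let J ⊆ A be a closed two-sided ideal with a bounded approximate identity (e_λ) with sup_λ ‖e_λ‖ = M, let θ : J → B(K) be a non-degenerate completely bounded representation, and let θ̂ : A → B(K) be its unique extension. Then for every n ∈ ℕ, ‖θ̂⁽ⁿ⁾‖ ≤ M ‖θ⁽ⁿ⁾‖; in particular θ̂ is completely bounded with ‖θ̂‖_cb ≤ M ‖θ‖_cb. -/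
noncomputable section

variable {H K : Type} [NormedAddCommGroup H] [InnerProductSpace ℂ H]
  [NormedAddCommGroup K] [InnerProductSpace ℂ K]

set_option linter.unusedSectionVars false in
lemma amp_apply' {H : Type} [NormedAddCommGroup H] [InnerProductSpace ℂ H]
    (n : ℕ) (a : Matrix (Fin n) (Fin n) (H →L[ℂ] H))
    (v : PiLp 2 fun _ : Fin n => H) (i : Fin n) :
    (amp n a v) i = ∑ j, a i j (v j) := by
  simp [amp, PiLp.continuousLinearEquiv, WithLp.linearEquiv, ContinuousLinearMap.sum_apply]
  rfl

lemma amp_mul' {H : Type} [NormedAddCommGroup H] [InnerProductSpace ℂ H]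
    (n : ℕ) (a b : Matrix (Fin n) (Fin n) (H →L[ℂ] H)) :
    amp n (a * b) = amp n a ∘L amp n b := by
  ext v i
  show (amp n (a * b) v) i = (amp n a (amp n b v)) i
  simp only [amp_apply', Matrix.mul_apply, ContinuousLinearMap.sum_apply,
    ContinuousLinearMap.mul_apply, map_sum]
  rw [Finset.sum_comm]

lemma amp_diag_apply' {H : Type} [NormedAddCommGroup H] [InnerProductSpace ℂ H]
    (n : ℕ) (e : H →L[ℂ] H) (v : PiLp 2 fun _ : Fin n => H) (i : Fin n) :
    (amp n (Matrix.diagonal fun _ => e) v) i = e (v i) := by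
  rw [amp_apply']
  have h : ∀ x, ((Matrix.diagonal fun _ => e : Matrix (Fin n) (Fin n) _) i x) (v x)
      = if i = x then e (v x) else 0 := by
    intro x
    rw [Matrix.diagonal_apply]
    split <;> simp
  simp only [h, Finset.sum_ite_eq, Finset.mem_univ, if_true]

lemma amp_diag_norm_le' {H : Type} [NormedAddCommGroup H] [InnerProductSpace ℂ H]
    (n : ℕ) (e : H →L[ℂ] H) :
    ‖amp n (Matrix.diagonal fun _ => e)‖ ≤ ‖e‖ := by
  refine ContinuousLinearMap.opNorm_le_bound _ (norm_nonneg e) fun v => ?_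
  rw [PiLp.norm_eq_of_L2, PiLp.norm_eq_of_L2]
  rw [← Real.sqrt_sq (by positivity : (0:ℝ) ≤ ‖e‖), ← Real.sqrt_mul (by positivity)]
  refine Real.sqrt_le_sqrt ?_
  rw [Finset.mul_sum]
  refine Finset.sum_le_sum fun i _ => ?_
  rw [amp_diag_apply']
  calc ‖e (v i)‖^2 ≤ (‖e‖ * ‖v i‖)^2 := by
        apply pow_le_pow_left₀ (norm_nonneg _) (e.le_opNorm _)
    _ = ‖e‖^2 * ‖v i‖^2 := by ring


theorem extension_is_completely_bounded
    {H K : Type} [NormedAddCommGroup H] [InnerProductSpace ℂ H] [CompleteSpace H]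
    [NormedAddCommGroup K] [InnerProductSpace ℂ K] [CompleteSpace K]
    (A J : Set (H →L[ℂ] H)) (hA : IsOpAlg A) (hJ : IsClosedIdealIn J A)
    (M : ℝ) (hbai : IsBAIFor J M)
    (θ θh : (H →L[ℂ] H) → (K →L[ℂ] K)) (hrep : IsRepOn J θ)
    (hcb : CompletelyBoundedOn J θ) (hnd : ActsNonDeg (θ '' J))
    (hreph : IsRepOn A θh) (hext : ∀ j ∈ J, θh j = θ j) :
    (∀ (n : ℕ) (C : ℝ), 0 ≤ C → AmpBound J θ n C → AmpBound A θh n (M * C)) ∧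
    (∀ C : ℝ, 0 ≤ C → (∀ n : ℕ, AmpBound J θ n C) →
      ∀ n : ℕ, AmpBound A θh n (M * C)) := by
  classical
  obtain ⟨ι, inst, hne, e, heJ, heM, hconv⟩ := hbai
  letI : SemilatticeSup ι := inst
  have hM0 : 0 ≤ M := le_trans (norm_nonneg _) (heM hne.some)
  obtain ⟨C₀, hC₀⟩ := hrep.2.2.2
  set C₁ : ℝ := max C₀ 0 with hC₁def
  have hC₁0 : 0 ≤ C₁ := le_max_right _ _
  have hC₁ : ∀ u ∈ J, ‖θ u‖ ≤ C₁ * ‖u‖ :=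
    fun u hu => le_trans (hC₀ u hu) (mul_le_mul_of_nonneg_right (le_max_left _ _) (norm_nonneg _))
  -- J is closed under subtraction
  have hsubJ : ∀ u ∈ J, ∀ w ∈ J, u - w ∈ J := by
    intro u hu w hw
    have h1 : (-1 : ℂ) • w ∈ J := hJ.2.2.2.2.1 (-1) w hw
    have := hJ.2.2.2.1 u hu _ h1
    simpa [sub_eq_add_neg] using this
  have hθsub : ∀ u ∈ J, ∀ w ∈ J, θ u - θ w = θ (u - w) := by
    intro u hu w hw
    have h1 : u - w ∈ J := hsubJ u hu w hw
    have := hrep.1 _ h1 _ hw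
    rw [sub_add_cancel] at this
    rw [this]
    abel
  -- the dense subspace
  set D : Submodule ℂ K :=
    Submodule.span ℂ {x : K | ∃ t ∈ θ '' J, ∃ ξ ∈ (⊤ : Submodule ℂ K), x = t ξ} with hDdef
  have hD : Dense (D : Set K) := by
    rw [Submodule.dense_iff_topologicalClosure_eq_top]
    exact hnd
  -- the key pointwise convergence
  have key : ∀ b ∈ A, ∀ x ∈ D,
      Filter.Tendsto (fun l => θ (b * e l) x) Filter.atTop (nhds (θh b x)) := by
    intro b hb x hx
    induction hx using Submodule.span_induction with
    | mem x hxS =>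
      obtain ⟨t, ⟨j, hj, rfl⟩, ξ, -, rfl⟩ := hxS
      have hbel : ∀ l, b * e l ∈ J := fun l => (hJ.2.2.2.2.2 b hb _ (heJ l)).1
      have hbj : b * j ∈ J := (hJ.2.2.2.2.2 b hb j hj).1
      have h1 : ∀ l, θ (b * e l) (θ j ξ) = θ ((b * e l) * j) ξ := by
        intro l
        rw [hrep.2.2.1 _ (hbel l) _ hj]
        rfl
      have h2 : θh b (θ j ξ) = θ (b * j) ξ := by
        rw [← hext j hj, ← ContinuousLinearMap.mul_apply, ← hreph.2.2.1 b hb j (hJ.1 hj),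
          hext _ hbj]
      rw [h2]
      simp only [h1]
      rw [tendsto_iff_norm_sub_tendsto_zero]
      have hmemu : ∀ l, (b * e l) * j ∈ J :=
        fun l => (hJ.2.2.2.2.2 _ (hJ.1 (hbel l)) j hj).1
      have hbound : ∀ l, ‖θ ((b * e l) * j) ξ - θ (b * j) ξ‖
          ≤ (C₁ * ‖b‖ * ‖ξ‖) * ‖e l * j - j‖ := by
        intro l
        have hd : (b * e l) * j - b * j = b * (e l * j - j) := by
          rw [mul_sub, mul_assoc]
        have hdm : (b * e l) * j - b * j ∈ J := hsubJ _ (hmemu l) _ hbj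
        calc ‖θ ((b * e l) * j) ξ - θ (b * j) ξ‖
            = ‖θ ((b * e l) * j - b * j) ξ‖ := by
              rw [← hθsub _ (hmemu l) _ hbj]; rfl
          _ ≤ ‖θ ((b * e l) * j - b * j)‖ * ‖ξ‖ := ContinuousLinearMap.le_opNorm _ _
          _ ≤ (C₁ * ‖(b * e l) * j - b * j‖) * ‖ξ‖ :=
              mul_le_mul_of_nonneg_right (hC₁ _ hdm) (norm_nonneg _)
          _ ≤ (C₁ * (‖b‖ * ‖e l * j - j‖)) * ‖ξ‖ := by
              refine mul_le_mul_of_nonneg_right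
                (mul_le_mul_of_nonneg_left ?_ hC₁0) (norm_nonneg _)
              rw [hd]
              exact norm_mul_le _ _
          _ = (C₁ * ‖b‖ * ‖ξ‖) * ‖e l * j - j‖ := by ring
      have hz : Filter.Tendsto (fun l => (C₁ * ‖b‖ * ‖ξ‖) * ‖e l * j - j‖)
          Filter.atTop (nhds 0) := by
        have := (hconv j hj).2
        simpa using this.const_mul (C₁ * ‖b‖ * ‖ξ‖)
      exact squeeze_zero (fun l => norm_nonneg _) hbound hz
    | zero =>
      simp only [map_zero]
      exact tendsto_const_nhds
    | add x y hxm hym ihx ihy =>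
      simp only [map_add]
      exact ihx.add ihy
    | smul c x hxm ihx =>
      simp only [map_smul]
      exact ihx.const_smul c
  -- the main amplified bound
  have main : ∀ (n : ℕ) (C : ℝ), 0 ≤ C → AmpBound J θ n C → AmpBound A θh n (M * C) := by
    intro n C hC0 hC a ha
    set B : ℝ := C * (‖amp n a‖ * M) with hBdef
    have hB0 : 0 ≤ B := by positivity
    -- bound on a dense set
    have hV : ∀ v : PiLp 2 fun _ : Fin n => K, (∀ i, v i ∈ D) →
        ‖amp n (a.map θh) v‖ ≤ B * ‖v‖ := by
      intro v hv
      set x : ι → Matrix (Fin n) (Fin n) (H →L[ℂ] H) :=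
        fun l => a * Matrix.diagonal (fun _ => e l) with hxdef
      have hxJ : ∀ l, MatEntriesIn J (x l) := by
        intro l i j
        rw [hxdef]
        simp only [Matrix.mul_diagonal]
        exact (hJ.2.2.2.2.2 _ (ha i j) _ (heJ l)).1
      have hxentry : ∀ l i j, (x l) i j = a i j * e l := by
        intro l i j
        rw [hxdef]
        simp [Matrix.mul_diagonal]
      -- norm bound on amp of x l
      have hnx : ∀ l, ‖amp n ((x l).map θ)‖ ≤ C * (‖amp n a‖ * M) := by
        intro l
        refine le_trans (hC (x l) (hxJ l)) (mul_le_mul_of_nonneg_left ?_ hC0)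
        rw [hxdef, amp_mul']
        refine le_trans (ContinuousLinearMap.opNorm_comp_le _ _) ?_
        exact mul_le_mul_of_nonneg_left
          (le_trans (amp_diag_norm_le' n (e l)) (heM l)) (norm_nonneg _)
      -- convergence of amp (x l).map θ v to amp (a.map θh) v
      have hten : Filter.Tendsto (fun l => amp n ((x l).map θ) v) Filter.atTop
          (nhds (amp n (a.map θh) v)) := by
        set Ψ := (PiLp.continuousLinearEquiv 2 ℂ (fun _ : Fin n => K)).toHomeomorph with hΨdef
        have hg : Filter.Tendsto (fun l => (fun i => ∑ j, θ (a i j * e l) (v j) : Fin n → K))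
            Filter.atTop (nhds (fun i => ∑ j, θh (a i j) (v j))) := by
          rw [tendsto_pi_nhds]
          intro i
          exact tendsto_finset_sum _ fun j _ => key (a i j) (ha i j) (v j) (hv j)
        have hcomp := (Ψ.symm.continuous.tendsto _).comp hg
        have he1 : ∀ l, Ψ.symm (fun i => ∑ j, θ (a i j * e l) (v j)) = amp n ((x l).map θ) v := by
          intro l
          refine PiLp.ext fun i => ?_
          show (∑ j, θ (a i j * e l) (v j)) = (amp n ((x l).map θ) v) i
          rw [amp_apply']
          refine Finset.sum_congr rfl fun j _ => ?_
          rw [Matrix.map_apply, hxentry]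
        have he2 : Ψ.symm (fun i => ∑ j, θh (a i j) (v j)) = amp n (a.map θh) v := by
          refine PiLp.ext fun i => ?_
          show (∑ j, θh (a i j) (v j)) = (amp n (a.map θh) v) i
          rw [amp_apply']
          refine Finset.sum_congr rfl fun j _ => ?_
          rw [Matrix.map_apply]
        rw [← he2]
        refine hcomp.congr fun l => ?_
        exact he1 l
      have hnorm : Filter.Tendsto (fun l => ‖amp n ((x l).map θ) v‖) Filter.atTop
          (nhds ‖amp n (a.map θh) v‖) := hten.norm
      haveI : (Filter.atTop : Filter ι).NeBot := Filter.atTop_neBot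
      refine le_of_tendsto hnorm (Filter.Eventually.of_forall fun l => ?_)
      calc ‖amp n ((x l).map θ) v‖ ≤ ‖amp n ((x l).map θ)‖ * ‖v‖ :=
            ContinuousLinearMap.le_opNorm _ _
        _ ≤ B * ‖v‖ := mul_le_mul_of_nonneg_right (hnx l) (norm_nonneg _)
    -- extend by density
    have hall : ∀ v : PiLp 2 fun _ : Fin n => K, ‖amp n (a.map θh) v‖ ≤ B * ‖v‖ := by
      set Ψ := (PiLp.continuousLinearEquiv 2 ℂ (fun _ : Fin n => K)).toHomeomorph with hΨdef
      have hdense : Dense (Set.univ.pi fun _ : Fin n => (D : Set K)) :=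
        dense_pi Set.univ fun i _ => hD
      have himg : Dense (Ψ.symm '' (Set.univ.pi fun _ : Fin n => (D : Set K))) :=
        (Ψ.symm.isDenseEmbedding.dense_image).mpr hdense
      have hsub : (Ψ.symm '' (Set.univ.pi fun _ : Fin n => (D : Set K))) ⊆
          {v : PiLp 2 fun _ : Fin n => K | ‖amp n (a.map θh) v‖ ≤ B * ‖v‖} := by
        rintro v ⟨w, hw, rfl⟩
        exact hV _ fun i => hw i (Set.mem_univ i)
      have hclosed : IsClosed {v : PiLp 2 fun _ : Fin n => K | ‖amp n (a.map θh) v‖ ≤ B * ‖v‖} :=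
        isClosed_le ((amp n (a.map θh)).continuous.norm) (continuous_const.mul continuous_norm)
      intro v
      have : v ∈ closure (Ψ.symm '' (Set.univ.pi fun _ : Fin n => (D : Set K))) := by
        rw [himg.closure_eq]; trivial
      exact hclosed.closure_subset_iff.mpr hsub this
    have := ContinuousLinearMap.opNorm_le_bound _ hB0 hall
    calc ‖amp n (a.map θh)‖ ≤ B := this
      _ = M * C * ‖amp n a‖ := by rw [hBdef]; ring
  exact ⟨main, fun C hC0 hall n => main n C hC0 (hall n)⟩


end
end

section
/- Let A be an operator algebra with the total reduction property, let J ⊆ A be a closed two-sided ideal, and let θ : A → B(H) be a representation. Then there exist a closed subspace H₀ ⊆ H, representations ρ : A → B(H₀) and τ : A → B(H₀^⊥), and an invertible X ∈ B(H), such that ρ|_J acts non-degenerately on H₀, τ(J) = 0, and X θ(a) X⁻¹ = ρ(a) ⊕ τ(a) for all a ∈ A. -/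
noncomputable section

variable {H K : Type} [NormedAddCommGroup H] [InnerProductSpace ℂ H]
  [NormedAddCommGroup K] [InnerProductSpace ℂ K]

theorem trp_splitting_along_ideal
    {H K : Type} [NormedAddCommGroup H] [InnerProductSpace ℂ H] [CompleteSpace H]
    [NormedAddCommGroup K] [InnerProductSpace ℂ K] [CompleteSpace K]
    (A J : Set (H →L[ℂ] H)) (hA : IsOpAlg A) (htrp : HasTRP A)
    (hJ : IsClosedIdealIn J A)
    (θ : (H →L[ℂ] H) → (K →L[ℂ] K)) (hrep : IsRepOn A θ) :
    ∃ H₀ : Submodule ℂ K, IsClosed (H₀ : Set K) ∧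
      ∃ X Xinv : K →L[ℂ] K, Xinv * X = 1 ∧ X * Xinv = 1 ∧
        (∀ a ∈ A, ∀ ξ ∈ H₀, (X * θ a * Xinv) ξ ∈ H₀) ∧
        (∀ a ∈ A, ∀ ξ ∈ H₀ᗮ, (X * θ a * Xinv) ξ ∈ H₀ᗮ) ∧
        (∀ j ∈ J, ∀ ξ ∈ H₀ᗮ, (X * θ j * Xinv) ξ = 0) ∧
        closSpanOrbit ((fun a => X * θ a * Xinv) '' J) H₀ = H₀ := by
  obtain ⟨hadd, hsmul, hmul, hbdd⟩ := hrep
  obtain ⟨hJA, hJcl, hJ0, hJadd, hJsmul, hJmul⟩ := hJ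
  set M : Submodule ℂ K := closSpanOrbit (θ '' J) ⊤ with hMdef
  have hMclosed : IsClosed (M : Set K) := Submodule.isClosed_topologicalClosure _
  -- every θ j has range inside M
  have hgen : ∀ j ∈ J, ∀ ξ : K, θ j ξ ∈ M := by
    intro j hj ξ
    exact Submodule.le_topologicalClosure _
      (Submodule.subset_span ⟨θ j, ⟨j, hj, rfl⟩, ξ, trivial, rfl⟩)
  -- M is invariant under θ a for a ∈ A
  have hInvSpan : ∀ a ∈ A, ∀ ξ ∈ Submodule.span ℂ
      {x : K | ∃ t ∈ θ '' J, ∃ η ∈ (⊤ : Submodule ℂ K), x = t η},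
      θ a ξ ∈ Submodule.span ℂ
      {x : K | ∃ t ∈ θ '' J, ∃ η ∈ (⊤ : Submodule ℂ K), x = t η} := by
    intro a ha ξ hξ
    induction hξ using Submodule.span_induction with
    | mem x hx =>
      obtain ⟨t, ⟨j, hj, rfl⟩, η, -, rfl⟩ := hx
      have h1 : θ a (θ j η) = θ (a * j) η := by
        rw [hmul a ha j (hJA hj)]; rfl
      rw [h1]
      exact Submodule.subset_span ⟨θ (a * j), ⟨a * j, (hJmul a ha j hj).1, rfl⟩, η, trivial, rfl⟩
    | zero => simpa using Submodule.zero_mem _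
    | add x y _ _ hx hy => rw [map_add]; exact Submodule.add_mem _ hx hy
    | smul c x _ hx => rw [map_smul]; exact Submodule.smul_mem _ c hx
  have hInv : ∀ a ∈ A, ∀ ξ ∈ M, θ a ξ ∈ M := by
    intro a ha ξ hξ
    have hcl : (M : Set K) = closure (Submodule.span ℂ
        {x : K | ∃ t ∈ θ '' J, ∃ η ∈ (⊤ : Submodule ℂ K), x = t η} : Set K) := by
      simp [hMdef, closSpanOrbit, Submodule.topologicalClosure_coe]
    have hξ' : ξ ∈ closure (Submodule.span ℂ
        {x : K | ∃ t ∈ θ '' J, ∃ η ∈ (⊤ : Submodule ℂ K), x = t η} : Set K) := by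
      rw [← hcl]; exact hξ
    have : θ a ξ ∈ closure (Submodule.span ℂ
        {x : K | ∃ t ∈ θ '' J, ∃ η ∈ (⊤ : Submodule ℂ K), x = t η} : Set K) :=
      map_mem_closure (θ a).continuous hξ' (fun x hx => hInvSpan a ha x hx)
    rw [← SetLike.mem_coe, hcl]; exact this
  -- apply TRP
  obtain ⟨E, hE2, hErange, hEcomm⟩ :=
    htrp K θ ⟨hadd, hsmul, hmul, hbdd⟩ M hMclosed hInv
  have hEE : ∀ ξ : K, E (E ξ) = E ξ := by
    intro ξ
    have := DFunLike.congr_fun hE2 ξ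
    simpa [ContinuousLinearMap.mul_apply] using this
  have hEmem : ∀ ξ : K, E ξ ∈ M := by
    intro ξ; rw [← hErange]; exact ⟨ξ, rfl⟩
  have hEfix : ∀ ξ ∈ M, E ξ = ξ := by
    intro ξ hξ
    rw [← hErange] at hξ
    obtain ⟨η, rfl⟩ := hξ
    exact hEE η
  have hEcomm' : ∀ a ∈ A, ∀ ξ : K, E (θ a ξ) = θ a (E ξ) := by
    intro a ha ξ
    have := DFunLike.congr_fun (hEcomm a ha) ξ
    simpa [ContinuousLinearMap.mul_apply] using this
  haveI : CompleteSpace M := hMclosed.completeSpace_coe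
  set P : K →L[ℂ] K := M.subtypeL ∘L M.orthogonalProjectionOnto with hPdef
  have hPmem : ∀ ξ : K, P ξ ∈ M := fun ξ => (M.orthogonalProjectionOnto ξ).2
  have hPfix : ∀ ξ ∈ M, P ξ = ξ := by
    intro ξ hξ
    exact Submodule.starProjection_eq_self_iff.2 hξ
  have hPzero : ∀ ξ ∈ Mᗮ, P ξ = 0 := by
    intro ξ hξ
    simp [hPdef, Submodule.orthogonalProjectionOnto_apply_of_mem_orthogonal hξ]
  have hPker : ∀ ξ : K, P ξ = 0 → ξ ∈ Mᗮ := by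
    intro ξ hξ
    have h := Submodule.sub_starProjection_mem_orthogonal (K := M) ξ
    have : ξ - P ξ ∈ Mᗮ := h
    rwa [hξ, sub_zero] at this
  set X : K →L[ℂ] K := 1 - P + E with hXdef
  set Xinv : K →L[ℂ] K := 1 + P - E with hXinvdef
  have hXapp : ∀ ξ : K, X ξ = ξ - P ξ + E ξ := by
    intro ξ; simp [hXdef]
  have hXinvapp : ∀ ξ : K, Xinv ξ = ξ + P ξ - E ξ := by
    intro ξ; simp [hXinvdef]
  have hXfix : ∀ ξ ∈ M, X ξ = ξ := by
    intro ξ hξ; rw [hXapp, hPfix ξ hξ, hEfix ξ hξ]; abel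
  have hXinvfix : ∀ ξ ∈ M, Xinv ξ = ξ := by
    intro ξ hξ; rw [hXinvapp, hPfix ξ hξ, hEfix ξ hξ]; abel
  have hPE : ∀ ξ : K, P (E ξ) = E ξ := fun ξ => hPfix _ (hEmem ξ)
  have hEP : ∀ ξ : K, E (P ξ) = P ξ := fun ξ => hEfix _ (hPmem ξ)
  have hPP : ∀ ξ : K, P (P ξ) = P ξ := fun ξ => hPfix _ (hPmem ξ)
  refine ⟨M, hMclosed, X, Xinv, ?_, ?_, ?_, ?_, ?_, ?_⟩
  · -- Xinv * X = 1
    ext ξ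
    have : Xinv (X ξ) = ξ := by
      simp only [hXapp, hXinvapp, map_add, map_sub, hPP, hPE, hEP, hEE]
      abel
    simpa [ContinuousLinearMap.mul_apply] using this
  · -- X * Xinv = 1
    ext ξ
    have : X (Xinv ξ) = ξ := by
      simp only [hXinvapp, hXapp, map_add, map_sub, hPP, hPE, hEP, hEE]
      abel
    simpa [ContinuousLinearMap.mul_apply] using this
  · -- invariance of M
    intro a ha ξ hξ
    have h1 : (X * θ a * Xinv) ξ = X (θ a (Xinv ξ)) := rfl
    rw [h1, hXinvfix ξ hξ, hXfix _ (hInv a ha ξ hξ)]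
    exact hInv a ha ξ hξ
  · -- invariance of Mᗮ
    intro a ha ξ hξ
    have h1 : (X * θ a * Xinv) ξ = X (θ a (Xinv ξ)) := rfl
    apply hPker
    rw [h1]
    set ζ := θ a (Xinv ξ) with hζ
    have h2 : P (X ζ) = E ζ := by
      rw [hXapp, map_add P, map_sub P, hPP, hPE]; abel
    rw [h2, hζ, hXinvapp, hPzero ξ hξ, add_zero, hEcomm' a ha, map_sub E, hEE, sub_self,
      map_zero]
  · -- θ J kills Mᗮ
    intro j hj ξ hξ
    have h1 : (X * θ j * Xinv) ξ = X (θ j (Xinv ξ)) := rfl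
    rw [h1, hXinvapp, hPzero ξ hξ, add_zero, map_sub (θ j),
      ← hEcomm' j (hJA hj), hEfix _ (hgen j hj ξ), sub_self, map_zero]
  · -- non-degeneracy
    have hsetEq : {x : K | ∃ t ∈ (fun a => X * θ a * Xinv) '' J, ∃ ξ ∈ M, x = t ξ}
        = {x : K | ∃ t ∈ θ '' J, ∃ ξ ∈ M, x = t ξ} := by
      ext x
      constructor
      · rintro ⟨t, ⟨j, hj, rfl⟩, ξ, hξ, rfl⟩
        refine ⟨θ j, ⟨j, hj, rfl⟩, ξ, hξ, ?_⟩
        show (X * θ j * Xinv) ξ = θ j ξ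
        have h1 : (X * θ j * Xinv) ξ = X (θ j (Xinv ξ)) := rfl
        rw [h1, hXinvfix ξ hξ, hXfix _ (hgen j hj ξ)]
      · rintro ⟨t, ⟨j, hj, rfl⟩, ξ, hξ, rfl⟩
        refine ⟨X * θ j * Xinv, ⟨j, hj, rfl⟩, ξ, hξ, ?_⟩
        show θ j ξ = (X * θ j * Xinv) ξ
        have h1 : (X * θ j * Xinv) ξ = X (θ j (Xinv ξ)) := rfl
        rw [h1, hXinvfix ξ hξ, hXfix _ (hgen j hj ξ)]
    have hNM : closSpanOrbit (θ '' J) M = M := by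
      apply le_antisymm
      · apply Submodule.topologicalClosure_minimal
        · rw [Submodule.span_le]
          rintro x ⟨t, ⟨j, hj, rfl⟩, ξ, -, rfl⟩
          exact hgen j hj ξ
        · exact hMclosed
      · apply Submodule.topologicalClosure_minimal
        · rw [Submodule.span_le]
          rintro x ⟨t, ⟨j, hj, rfl⟩, ξ, -, rfl⟩
          have h0 : θ j ξ = θ j (E ξ) := by
            have h2 : θ j ξ - θ j (E ξ) = 0 := by
              rw [← hEcomm' j (hJA hj), hEfix _ (hgen j hj ξ), sub_self]
            exact sub_eq_zero.mp h2
          rw [h0]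
          exact Submodule.le_topologicalClosure _
            (Submodule.subset_span ⟨θ j, ⟨j, hj, rfl⟩, E ξ, hEmem ξ, rfl⟩)
        · exact Submodule.isClosed_topologicalClosure _
    show closSpanOrbit ((fun a => X * θ a * Xinv) '' J) M = M
    unfold closSpanOrbit
    rw [hsetEq]
    exact hNM

end
end

section
/- Let A ⊆ B(H) be an operator algebra and let J ⊆ A be a closed two-sided ideal of A that is self-adjoint (J* = J). Then J is a closed two-sided ideal of C*(A), the C*-algebra generated by A in B(H). -/
noncomputable section

variable {H K : Type} [NormedAddCommGroup H] [InnerProductSpace ℂ H]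
  [NormedAddCommGroup K] [InnerProductSpace ℂ K]

theorem selfadjoint_ideal_is_ideal_of_cstar_envelope
    {H : Type} [NormedAddCommGroup H] [InnerProductSpace ℂ H] [CompleteSpace H]
    (A J : Set (H →L[ℂ] H)) (hA : IsOpAlg A) (hJ : IsClosedIdealIn J A)
    (hstar : ∀ j ∈ J, star j ∈ J) :
    IsClosedIdealIn J (CstarSet A) := by
  obtain ⟨hJA, hJcl, hJ0, hJadd, hJsmul, hJmul⟩ := hJ
  obtain ⟨hAcl, hA0, hAadd, hAsmul, hAmul⟩ := hA
  -- the multiplier set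
  set S : Set (H →L[ℂ] H) := {a | ∀ j ∈ J, a * j ∈ J ∧ j * a ∈ J} with hS
  have hScl : IsClosed S := by
    have : S = ⋂ j ∈ J, ({a | a * j ∈ J} ∩ {a | j * a ∈ J}) := by
      ext a; simp only [hS, Set.mem_iInter, Set.mem_inter_iff, Set.mem_setOf_eq]
    rw [this]
    refine isClosed_biInter fun j hj => IsClosed.inter ?_ ?_
    · exact hJcl.preimage (by continuity)
    · exact hJcl.preimage (by continuity)
  have hAS : A ⊆ S := fun a ha j hj => hJmul a ha j hj
  have hSfam : S ∈ {S : Set (H →L[ℂ] H) | A ⊆ S ∧ IsClosed S ∧ (0 : H →L[ℂ] H) ∈ S ∧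
      (∀ a ∈ S, ∀ b ∈ S, a + b ∈ S) ∧ (∀ (c : ℂ), ∀ a ∈ S, c • a ∈ S) ∧
      (∀ a ∈ S, ∀ b ∈ S, a * b ∈ S) ∧ (∀ a ∈ S, star a ∈ S)} := by
    refine ⟨hAS, hScl, ?_, ?_, ?_, ?_, ?_⟩
    · intro j hj; simp [hJ0]
    · intro a ha b hb j hj
      exact ⟨by rw [add_mul]; exact hJadd _ (ha j hj).1 _ (hb j hj).1,
             by rw [mul_add]; exact hJadd _ (ha j hj).2 _ (hb j hj).2⟩
    · intro c a ha j hj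
      exact ⟨by rw [smul_mul_assoc]; exact hJsmul c _ (ha j hj).1,
             by rw [mul_smul_comm]; exact hJsmul c _ (ha j hj).2⟩
    · intro a ha b hb j hj
      exact ⟨by rw [mul_assoc]; exact (ha _ (hb j hj).1).1,
             by rw [← mul_assoc]; exact (hb _ (ha j hj).2).2⟩
    · intro a ha j hj
      constructor
      · have : star a * j = star (star j * a) := by simp [star_mul]
        rw [this]
        exact hstar _ (ha _ (hstar j hj)).2
      · have : j * star a = star (a * star j) := by simp [star_mul]
        rw [this]
        exact hstar _ (ha _ (hstar j hj)).1
  have hCS : CstarSet A ⊆ S := fun a ha => ha S hSfam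
  refine ⟨?_, hJcl, hJ0, hJadd, hJsmul, ?_⟩
  · intro j hj T hT
    exact hT.1 (hJA hj)
  · intro a ha j hj
    exact hCS ha j hj

end
end
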